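/- Let ρ ∈ (0,1] and let u : ℕ → [0,∞) be a sequence such that there are constants 0 < c ≤ C with c·ρ^{2n}·e^{−n/log n} ≤ u_{2n} ≤ C·ρ^{2n}·e^{−n/log n} for all n ≥ 2, and such that either u_{2n+1} = 0 for all n ≥ 0, or lim_{n→∞} u_{n+1}/u_n = ρ. Then for every ε > 0 there exists N > 0 such that for all n ≥ 2N: Σ_{i=N}^{n−N} u_i·u_{n−i} ≤ ε·u_n. -/

import Mathlib

open Filter

open Real

private lemma log_ge_two {x : ℝ} (hx : 8 ≤ x) : 2 ≤ Real.log x := by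
  have h8 : Real.exp 2 ≤ 8 := by
    have h := Real.exp_one_lt_d9
    have : Real.exp 2 = Real.exp 1 * Real.exp 1 := by rw [← Real.exp_add]; norm_num
    nlinarith [Real.exp_pos 1]
  calc (2:ℝ) = Real.log (Real.exp 2) := (Real.log_exp 2).symm
    _ ≤ Real.log x := Real.log_le_log (Real.exp_pos 2) (le_trans h8 hx)

private lemma log_gt_one {x : ℝ} (hx : 3 ≤ x) : 1 < Real.log x := by
  rw [show (1:ℝ) = Real.log (Real.exp 1) from (Real.log_exp 1).symm]
  apply Real.log_lt_log (Real.exp_pos 1)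
  have := Real.exp_one_lt_d9
  linarith

private lemma ratio_mono {s t : ℝ} (h2 : 2 ≤ s) (hst : s ≤ t) :
    (t - 1) / t ^ 2 ≤ (s - 1) / s ^ 2 := by
  have ht : (2:ℝ) ≤ t := le_trans h2 hst
  rw [div_le_div_iff₀ (by nlinarith) (by nlinarith)]
  nlinarith [mul_nonneg (sub_nonneg.2 hst) (by nlinarith : (0:ℝ) ≤ s*t - s - t)]

private lemma f_deriv {x : ℝ} (hx : 3 ≤ x) :
    HasDerivAt (fun y : ℝ => y / Real.log y) ((Real.log x - 1) / (Real.log x) ^ 2) x := by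
  have hx0 : x ≠ 0 := by linarith
  have hlog : Real.log x ≠ 0 := by have := log_gt_one hx; linarith
  have h := (hasDerivAt_id x).div (Real.hasDerivAt_log hx0) hlog
  refine h.congr_deriv ?_
  simp [hx0]

private lemma mvt_f {x y : ℝ} (hx : 3 ≤ x) (hxy : x < y) :
    ∃ c, x < c ∧ c < y ∧
      y / Real.log y - x / Real.log x = (y - x) * ((Real.log c - 1) / (Real.log c) ^ 2) := by
  have hcont : ContinuousOn (fun z : ℝ => z / Real.log z) (Set.Icc x y) := by
    intro z hz
    exact (f_deriv (le_trans hx hz.1)).continuousAt.continuousWithinAt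
  obtain ⟨c, hc, hc2⟩ := exists_hasDerivAt_eq_slope (fun z : ℝ => z / Real.log z)
    (fun z => (Real.log z - 1) / (Real.log z) ^ 2) hxy hcont
    (fun z hz => f_deriv (le_trans hx hz.1.le))
  refine ⟨c, hc.1, hc.2, ?_⟩
  rw [hc2, mul_comm, div_mul_cancel₀ _ (sub_ne_zero.2 hxy.ne')]

private lemma f_mono {x y : ℝ} (hx : 3 ≤ x) (hxy : x ≤ y) :
    x / Real.log x ≤ y / Real.log y := by
  rcases eq_or_lt_of_le hxy with rfl | h
  · exact le_rfl
  · obtain ⟨c, hc1, _, he⟩ := mvt_f hx h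
    have hlc : 1 < Real.log c := log_gt_one (by linarith)
    have h0 : 0 ≤ (y - x) * ((Real.log c - 1) / (Real.log c) ^ 2) :=
      mul_nonneg (by linarith) (div_nonneg (by linarith) (sq_nonneg _))
    linarith

private lemma f_incr_le {x y : ℝ} (hx : 8 ≤ x) (hxy : x < y) :
    y / Real.log y - x / Real.log x ≤ (y - x) * ((Real.log x - 1) / (Real.log x) ^ 2) := by
  obtain ⟨c, hc1, _, he⟩ := mvt_f (by linarith) hxy
  rw [he]
  have hs : 2 ≤ Real.log x := log_ge_two hx
  have hst : Real.log x ≤ Real.log c := Real.log_le_log (by linarith) hc1.le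
  have := ratio_mono hs hst
  nlinarith

/-- Key superadditivity excess for f(x) = x/log x. -/
private lemma lemA {a b : ℝ} (ha : 8 ≤ a) (hab : a ≤ b) :
    (a + b) / Real.log (a + b) + a / (Real.log a) ^ 2 ≤ a / Real.log a + b / Real.log b := by
  have hb : 8 ≤ b := le_trans ha hab
  have h1 : (a + b) / Real.log (a + b) - b / Real.log b
      ≤ a * ((Real.log b - 1) / (Real.log b) ^ 2) := by
    have := f_incr_le hb (by linarith : b < a + b)
    calc (a + b) / Real.log (a + b) - b / Real.log b
        ≤ (a + b - b) * ((Real.log b - 1) / (Real.log b) ^ 2) := this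
      _ = a * ((Real.log b - 1) / (Real.log b) ^ 2) := by ring_nf
  have hs : 2 ≤ Real.log a := log_ge_two ha
  have h2 : (Real.log b - 1) / (Real.log b) ^ 2 ≤ (Real.log a - 1) / (Real.log a) ^ 2 :=
    ratio_mono hs (Real.log_le_log (by linarith) hab)
  have h3 : a * ((Real.log a - 1) / (Real.log a) ^ 2) + a / (Real.log a) ^ 2 = a / Real.log a := by
    field_simp
    ring
  nlinarith

private lemma E_big {a : ℝ} (ha : 531441 ≤ a) : 2 * Real.log a + 2 ≤ a / (Real.log a) ^ 2 := by
  have ha0 : (0:ℝ) < a := by linarith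
  set y : ℝ := a ^ (6:ℝ)⁻¹ with hy
  have hy0 : 0 < y := Real.rpow_pos_of_pos ha0 _
  have hy6 : y ^ (6:ℕ) = a := by
    rw [hy, ← Real.rpow_natCast (a ^ (6:ℝ)⁻¹) 6, ← Real.rpow_mul ha0.le]
    norm_num
  have hy9 : (9:ℝ) ≤ y := by
    have : ((9:ℝ) ^ (6:ℕ)) ^ (6:ℝ)⁻¹ ≤ a ^ (6:ℝ)⁻¹ :=
      Real.rpow_le_rpow (by positivity) (by norm_num; linarith) (by norm_num)
    rwa [← Real.rpow_natCast (9:ℝ) 6, ← Real.rpow_mul (by norm_num), show ((6:ℕ):ℝ) * (6:ℝ)⁻¹ = 1 by norm_num, Real.rpow_one] at this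
  have hlog : Real.log a = 6 * Real.log y := by
    rw [hy, Real.log_rpow ha0]; ring
  have hly : Real.log y ≤ y := by
    have := Real.log_le_sub_one_of_pos hy0
    linarith
  have hs2 : 2 ≤ Real.log a := log_ge_two (by linarith)
  rw [le_div_iff₀ (by positivity)]
  set s := Real.log a
  have hs6y : s ≤ 6 * y := by rw [hlog]; linarith
  have hcube : s ^ 3 ≤ (6*y) ^ 3 := pow_le_pow_left₀ (by linarith) hs6y 3
  have hsq : s ^ 2 ≤ (6*y) ^ 2 := pow_le_pow_left₀ (by linarith) hs6y 2
  have : (2 * s + 2) * s ^ 2 ≤ 2 * (6*y)^3 + 2 * (6*y)^2 := by nlinarith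
  have h3 : (729:ℝ) ≤ y ^ 3 := by nlinarith
  have h23 : y ^ 2 ≤ y ^ 3 := by nlinarith
  have h6 : y ^ (6:ℕ) = (y ^ 3) ^ 2 := by ring
  have h729 : 729 * y ^ 3 ≤ (y ^ 3) ^ 2 := by nlinarith [mul_le_mul_of_nonneg_right h3 (by positivity : (0:ℝ) ≤ y ^ 3)]
  have h2 : 2 * (6*y)^3 + 2 * (6*y)^2 ≤ y ^ (6:ℕ) := by rw [h6]; nlinarith
  rw [← hy6]
  linarith

private lemma core' (a b s : ℕ) (ha : 531441 ≤ a) (hab : a ≤ b) (hs3 : 3 ≤ s)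
    (hsab : s ≤ a + b + 1) :
    Real.exp (-(a:ℝ) / Real.log a) * Real.exp (-(b:ℝ) / Real.log b) ≤
      ((a:ℝ) ^ 2)⁻¹ * Real.exp (-(s:ℝ) / Real.log s) := by
  have hA : (531441:ℝ) ≤ (a:ℝ) := by exact_mod_cast ha
  have hAB : (a:ℝ) ≤ (b:ℝ) := by exact_mod_cast hab
  have hS3 : (3:ℝ) ≤ (s:ℝ) := by exact_mod_cast hs3
  have hSab : (s:ℝ) ≤ (a:ℝ) + (b:ℝ) + 1 := by exact_mod_cast hsab
  set A := (a:ℝ); set B := (b:ℝ); set S := (s:ℝ)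
  have hA8 : (8:ℝ) ≤ A := by linarith
  have hB8 : (8:ℝ) ≤ B := by linarith
  -- monotonicity: f S ≤ f (A + (B+1))
  have h1 : S / Real.log S ≤ (A + (B + 1)) / Real.log (A + (B + 1)) := by
    have : (A + (B+1)) = A + B + 1 := by ring
    rw [this]
    exact f_mono hS3 hSab
  -- lemA at (A, B+1)
  have h2 := lemA hA8 (by linarith : A ≤ B + 1)
  -- increment bound: f (B+1) ≤ f B + 1
  have h3 : (B + 1) / Real.log (B + 1) - B / Real.log B ≤ 1 := by
    have h := f_incr_le hB8 (by linarith : B < B + 1)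
    have hs : 2 ≤ Real.log B := log_ge_two hB8
    have hr : (Real.log B - 1) / (Real.log B) ^ 2 ≤ 1 := by
      rw [div_le_one (by positivity)]
      nlinarith
    calc (B + 1) / Real.log (B + 1) - B / Real.log B
        ≤ (B + 1 - B) * ((Real.log B - 1) / (Real.log B) ^ 2) := h
      _ = (Real.log B - 1) / (Real.log B) ^ 2 := by ring
      _ ≤ 1 := hr
  have h4 : 2 * Real.log A + 2 ≤ A / (Real.log A) ^ 2 := E_big hA
  -- combine: -A/log A - B/log B ≤ -S/log S - 2 log A - 1
  have hkey : -(A / Real.log A) - B / Real.log B ≤ -(S / Real.log S) - 2 * Real.log A - 1 := by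
    linarith
  have hexp : Real.exp (-A / Real.log A) * Real.exp (-B / Real.log B)
      ≤ Real.exp (-(S / Real.log S) - 2 * Real.log A - 1) := by
    rw [← Real.exp_add]
    apply Real.exp_le_exp.2
    rw [neg_div, neg_div]
    linarith
  refine le_trans hexp ?_
  have hA0 : (0:ℝ) < A := by linarith
  have e2 : Real.exp (-(2 * Real.log A)) = (A ^ 2)⁻¹ := by
    rw [Real.exp_neg]
    congr 1
    rw [show 2 * Real.log A = Real.log (A ^ 2) by
      rw [Real.log_pow]; push_cast; ring, Real.exp_log (by positivity)]
  have hid : Real.exp (-(S / Real.log S) - 2 * Real.log A - 1)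
      = Real.exp (-(S / Real.log S)) * (A ^ 2)⁻¹ * Real.exp (-1) := by
    rw [← e2, ← Real.exp_add, ← Real.exp_add]
    congr 1
  rw [hid]
  have hle1 : Real.exp (-1:ℝ) ≤ 1 := Real.exp_le_one_iff.2 (by norm_num)
  have hnn : (0:ℝ) ≤ Real.exp (-(S / Real.log S)) * (A ^ 2)⁻¹ := by positivity
  calc Real.exp (-(S / Real.log S)) * (A ^ 2)⁻¹ * Real.exp (-1)
      ≤ Real.exp (-(S / Real.log S)) * (A ^ 2)⁻¹ * 1 := by
        exact mul_le_mul_of_nonneg_left hle1 hnn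
    _ = (A ^ 2)⁻¹ * Real.exp (-S / Real.log S) := by rw [neg_div]; ring

private lemma coreN (a b s : ℕ) (ha : 531441 ≤ a) (hb : 531441 ≤ b) (hs3 : 3 ≤ s)
    (hsab : s ≤ a + b + 1) :
    Real.exp (-(a:ℝ) / Real.log a) * Real.exp (-(b:ℝ) / Real.log b) ≤
      (((min a b : ℕ):ℝ) ^ 2)⁻¹ * Real.exp (-(s:ℝ) / Real.log s) := by
  rcases le_total a b with h | h
  · rw [min_eq_left h]
    exact core' a b s ha h hs3 hsab
  · rw [min_eq_right h, mul_comm (Real.exp _)]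
    exact core' b a s hb h hs3 (by omega)

private lemma inv_sub_inv_aux {x : ℝ} (hx : 1 ≤ x) : ((x + 1) ^ 2)⁻¹ ≤ x⁻¹ - (x + 1)⁻¹ := by
  have h0 : (0:ℝ) < x := by linarith
  have h1 : (0:ℝ) < x + 1 := by linarith
  have e : x⁻¹ - (x + 1)⁻¹ = (x * (x + 1))⁻¹ := by
    field_simp
    ring
  rw [e]
  apply inv_anti₀ (by positivity)
  nlinarith

private lemma tail_sum {N : ℕ} (hN : 2 ≤ N) (M : ℕ) :
    ∑ i ∈ Finset.Icc N M, (((i:ℕ):ℝ) ^ 2)⁻¹ ≤ ((N:ℝ) - 1)⁻¹ := by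
  have hNR : (2:ℝ) ≤ (N:ℝ) := by exact_mod_cast hN
  have hN1 : (0:ℝ) < (N:ℝ) - 1 := by linarith
  rcases lt_or_ge M N with h | h
  · rw [Finset.Icc_eq_empty (by omega)]
    simp [le_of_lt (inv_pos.2 hN1)]
  · have key : ∀ M, N ≤ M → ∑ i ∈ Finset.Icc N M, (((i:ℕ):ℝ) ^ 2)⁻¹
        ≤ ((N:ℝ) - 1)⁻¹ - ((M:ℕ):ℝ)⁻¹ := by
      intro M hM
      induction M, hM using Nat.le_induction with
      | base =>
        rw [Finset.Icc_self, Finset.sum_singleton]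
        have e : ((N:ℝ) - 1)⁻¹ - ((N:ℝ))⁻¹ = (((N:ℝ) - 1) * N)⁻¹ := by
          field_simp
          ring
        rw [e]
        apply inv_anti₀ (by nlinarith)
        nlinarith
      | succ M hM ih =>
        rw [Finset.sum_Icc_succ_top (by omega : N ≤ M + 1)]
        have hMR : (2:ℝ) ≤ (M:ℝ) := by exact_mod_cast le_trans hN hM
        have h2 := inv_sub_inv_aux (show (1:ℝ) ≤ (M:ℝ) by linarith)
        push_cast
        push_cast at ih
        linarith
    have := key M h
    have hM0 : (0:ℝ) ≤ ((M:ℕ):ℝ)⁻¹ := by positivity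
    linarith

private lemma refl_sum (v : ℕ → ℝ) (N n : ℕ) (h : 2 * N ≤ n) :
    ∑ i ∈ Finset.Icc N (n - N), v (n - i) = ∑ i ∈ Finset.Icc N (n - N), v i := by
  apply Finset.sum_nbij' (i := fun i => n - i) (j := fun i => n - i)
  · intro a ha; simp only [Finset.mem_Icc] at *; omega
  · intro a ha; simp only [Finset.mem_Icc] at *; omega
  · intro a ha; simp only [Finset.mem_Icc] at *; omega
  · intro a ha; simp only [Finset.mem_Icc] at *; omega
  · intro a ha; rfl

private lemma perterm_gen (ρ : ℝ) (u : ℕ → ℝ) (hu : ∀ n, 0 ≤ u n)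
    (c' C' : ℝ) (hc' : 0 < c') (hC' : 0 < C')
    (n i a b s : ℕ)
    (ha5 : 531441 ≤ a) (hb5 : 531441 ≤ b) (hs3 : 3 ≤ s) (hsab : s ≤ a + b + 1)
    (hm0 : 0 < min i (n - i))
    (hm : ((min i (n - i) : ℕ) : ℝ) ^ 2 ≤ 9 * ((min a b : ℕ) : ℝ) ^ 2)
    (hua : u i ≤ C' * ρ ^ i * Real.exp (-(a:ℝ) / Real.log a))
    (hub : u (n - i) ≤ C' * ρ ^ (n - i) * Real.exp (-(b:ℝ) / Real.log b))
    (hun : c' * ρ ^ n * Real.exp (-(s:ℝ) / Real.log s) ≤ u n)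
    (hρ0 : 0 < ρ) (hin : i ≤ n) :
    u i * u (n - i) ≤ (9 * C' ^ 2 / c') * u n * (((min i (n - i) : ℕ) : ℝ) ^ 2)⁻¹ := by
  set Ea := Real.exp (-(a:ℝ) / Real.log a) with hEa
  set Eb := Real.exp (-(b:ℝ) / Real.log b) with hEb
  set Es := Real.exp (-(s:ℝ) / Real.log s) with hEs
  have hEapos : 0 < Ea := Real.exp_pos _
  have hEbpos : 0 < Eb := Real.exp_pos _
  have hEspos : 0 < Es := Real.exp_pos _
  set mab := min a b with hmab
  set m := min i (n - i) with hmdef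
  have hmabpos : (0:ℝ) < ((mab:ℕ):ℝ) := by
    have : 0 < mab := by omega
    exact_mod_cast this
  have hmpos : (0:ℝ) < ((m:ℕ):ℝ) := by exact_mod_cast hm0
  have hcore : Ea * Eb ≤ (((mab:ℕ):ℝ) ^ 2)⁻¹ * Es := coreN a b s ha5 hb5 hs3 hsab
  have step1 : u i * u (n - i) ≤ C' ^ 2 * ρ ^ n * (Ea * Eb) := by
    calc u i * u (n - i) ≤ (C' * ρ ^ i * Ea) * (C' * ρ ^ (n - i) * Eb) :=
          mul_le_mul hua hub (hu _) (by positivity)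
      _ = C' ^ 2 * (ρ ^ i * ρ ^ (n - i)) * (Ea * Eb) := by ring
      _ = C' ^ 2 * ρ ^ n * (Ea * Eb) := by rw [← pow_add, Nat.add_sub_cancel' hin]
  have h9 : (((mab:ℕ):ℝ) ^ 2)⁻¹ ≤ 9 * (((m:ℕ):ℝ) ^ 2)⁻¹ := by
    rw [show (((mab:ℕ):ℝ) ^ 2)⁻¹ = 1 / ((mab:ℕ):ℝ) ^ 2 from (one_div _).symm,
      show (9:ℝ) * (((m:ℕ):ℝ) ^ 2)⁻¹ = 9 / ((m:ℕ):ℝ) ^ 2 from (div_eq_mul_inv 9 _).symm,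
      div_le_div_iff₀ (by positivity) (by positivity)]
    nlinarith
  have step2 : C' ^ 2 * ρ ^ n * (Ea * Eb) ≤ C' ^ 2 * ρ ^ n * ((((mab:ℕ):ℝ) ^ 2)⁻¹ * Es) :=
    mul_le_mul_of_nonneg_left hcore (by positivity)
  have step3 : C' ^ 2 * ρ ^ n * ((((mab:ℕ):ℝ) ^ 2)⁻¹ * Es)
      ≤ C' ^ 2 * ρ ^ n * (9 * (((m:ℕ):ℝ) ^ 2)⁻¹ * Es) := by
    apply mul_le_mul_of_nonneg_left _ (by positivity)
    exact mul_le_mul_of_nonneg_right h9 hEspos.le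
  have step4 : C' ^ 2 * ρ ^ n * (9 * (((m:ℕ):ℝ) ^ 2)⁻¹ * Es)
      ≤ (9 * C' ^ 2 / c') * u n * (((m:ℕ):ℝ) ^ 2)⁻¹ := by
    have e : C' ^ 2 * ρ ^ n * (9 * (((m:ℕ):ℝ) ^ 2)⁻¹ * Es)
        = (9 * C' ^ 2 / c') * (c' * ρ ^ n * Es) * (((m:ℕ):ℝ) ^ 2)⁻¹ := by
      field_simp
    rw [e]
    apply mul_le_mul_of_nonneg_right _ (by positivity)
    exact mul_le_mul_of_nonneg_left hun (by positivity)
  linarith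


/-- Let `ρ ∈ (0,1]` and let `u : ℕ → [0,∞)` satisfy
`u_{2n} ≍ ρ^{2n}·e^{-n/log n}` (for `n ≥ 2`) and the odd-term dichotomy (either all odd terms
vanish or `u_{n+1}/u_n → ρ`). Then for every `ε > 0` there is `N > 0` with
`Σ_{i=N}^{n-N} u_i·u_{n-i} ≤ ε·u_n` for all `n ≥ 2N`. -/
theorem stmt17 (ρ : ℝ) (hρ0 : 0 < ρ) (hρ1 : ρ ≤ 1)
    (u : ℕ → ℝ) (hu : ∀ n, 0 ≤ u n)
    (c C : ℝ) (hc : 0 < c) (hcC : c ≤ C)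
    (hlow : ∀ n : ℕ, 2 ≤ n →
      c * ρ ^ (2 * n) * Real.exp (-(n : ℝ) / Real.log n) ≤ u (2 * n))
    (hup : ∀ n : ℕ, 2 ≤ n →
      u (2 * n) ≤ C * ρ ^ (2 * n) * Real.exp (-(n : ℝ) / Real.log n))
    (hodd : (∀ n : ℕ, u (2 * n + 1) = 0) ∨
      Tendsto (fun n : ℕ => u (n + 1) / u n) atTop (nhds ρ)) :
    ∀ ε : ℝ, 0 < ε → ∃ N : ℕ, 0 < N ∧ ∀ n : ℕ, 2 * N ≤ n →
      ∑ i ∈ Finset.Icc N (n - N), u i * u (n - i) ≤ ε * u n := by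
  intro ε hε
  have hC0 : 0 < C := lt_of_lt_of_le hc hcC
  have main : ∃ K : ℝ, 0 < K ∧ ∃ N₀ : ℕ, 0 < N₀ ∧ ∀ n i : ℕ, N₀ ≤ i → N₀ ≤ n - i → i ≤ n →
      u i * u (n - i) ≤ K * u n * (((min i (n - i) : ℕ) : ℝ) ^ 2)⁻¹ := by
    rcases hodd with hA | hB
    · refine ⟨9 * C ^ 2 / c, by positivity, 1062882, by norm_num, fun n i hi hni hin => ?_⟩
      have hrhs : 0 ≤ (9 * C ^ 2 / c) * u n * (((min i (n - i) : ℕ) : ℝ) ^ 2)⁻¹ :=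
        mul_nonneg (mul_nonneg (by positivity) (hu n)) (by positivity)
      rcases Nat.even_or_odd i with ⟨a, hia⟩ | ⟨a, hia⟩
      swap
      · rw [hia, hA a, zero_mul]
        exact mul_nonneg (mul_nonneg (by positivity) (hu n)) (by positivity)
      rcases Nat.even_or_odd (n - i) with ⟨b, hib⟩ | ⟨b, hib⟩
      swap
      · rw [hib, hA b, mul_zero]
        exact mul_nonneg (mul_nonneg (by positivity) (hu n)) (by positivity)
      apply perterm_gen ρ u hu c C hc hC0 n i a b (a + b)
        (by omega) (by omega) (by omega) (by omega) (by omega)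
        ?_ ?_ ?_ ?_ hρ0 hin
      · have hmm : (min i (n - i) : ℕ) = 2 * min a b := by omega
        rw [hmm]
        push_cast
        nlinarith [sq_nonneg ((min a b : ℕ) : ℝ)]
      · have h := hup a (by omega)
        rw [show i = 2 * a by omega]
        exact h
      · have h := hup b (by omega)
        rw [show n - i = 2 * b by omega]
        exact h
      · have h := hlow (a + b) (by omega)
        rw [show n = 2 * (a + b) by omega]
        exact h
    · have hev : ∀ᶠ m in atTop, u (m + 1) / u m ∈ Set.Ioo (ρ / 2) (2 * ρ) :=
        hB (Ioo_mem_nhds (by linarith) (by linarith))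
      obtain ⟨M₁, hM₁⟩ := Filter.eventually_atTop.1 hev
      have hBB : ∀ m : ℕ, 2 * M₁ + 5 ≤ m →
          c / 2 * ρ ^ m * Real.exp (-((m / 2 : ℕ) : ℝ) / Real.log ((m / 2 : ℕ) : ℝ)) ≤ u m ∧
          u m ≤ (2 * C) * ρ ^ m * Real.exp (-((m / 2 : ℕ) : ℝ) / Real.log ((m / 2 : ℕ) : ℝ)) := by
        intro m hm
        rcases Nat.even_or_odd m with ⟨k, hk⟩ | ⟨k, hk⟩
        · have hk2 : 2 ≤ k := by omega
          have h1 := hlow k hk2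
          have h2 := hup k hk2
          rw [show m / 2 = k by omega, show m = 2 * k by omega]
          constructor
          · refine le_trans ?_ h1
            have hE : (0:ℝ) ≤ Real.exp (-(k : ℝ) / Real.log (k : ℝ)) := (Real.exp_pos _).le
            have hP : (0:ℝ) ≤ ρ ^ (2 * k) := by positivity
            nlinarith [mul_nonneg hP hE]
          · refine le_trans h2 ?_
            have hE : (0:ℝ) ≤ Real.exp (-(k : ℝ) / Real.log (k : ℝ)) := (Real.exp_pos _).le
            have hP : (0:ℝ) ≤ ρ ^ (2 * k) := by positivity
            nlinarith [mul_nonneg hP hE]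
        · have hk2 : 2 ≤ k := by omega
          have hr := hM₁ (2 * k) (by omega)
          have hpos : 0 < u (2 * k) := lt_of_lt_of_le (by positivity) (hlow k hk2)
          have hratio1 : ρ / 2 * u (2 * k) ≤ u (2 * k + 1) := by
            have h := hr.1
            rw [lt_div_iff₀ hpos] at h
            linarith
          have hratio2 : u (2 * k + 1) ≤ 2 * ρ * u (2 * k) := by
            have h := hr.2
            rw [div_lt_iff₀ hpos] at h
            linarith
          rw [show m / 2 = k by omega, show m = 2 * k + 1 by omega]
          constructor
          · calc c / 2 * ρ ^ (2 * k + 1) * Real.exp (-(k : ℝ) / Real.log (k : ℝ))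
                = ρ / 2 * (c * ρ ^ (2 * k) * Real.exp (-(k : ℝ) / Real.log (k : ℝ))) := by ring
              _ ≤ ρ / 2 * u (2 * k) :=
                  mul_le_mul_of_nonneg_left (hlow k hk2) (by positivity)
              _ ≤ u (2 * k + 1) := hratio1
          · calc u (2 * k + 1) ≤ 2 * ρ * u (2 * k) := hratio2
              _ ≤ 2 * ρ * (C * ρ ^ (2 * k) * Real.exp (-(k : ℝ) / Real.log (k : ℝ))) :=
                  mul_le_mul_of_nonneg_left (hup k hk2) (by positivity)
              _ = (2 * C) * ρ ^ (2 * k + 1) * Real.exp (-(k : ℝ) / Real.log (k : ℝ)) := by ring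
      refine ⟨9 * (2 * C) ^ 2 / (c / 2), by positivity, 2 * M₁ + 1062890, by omega,
        fun n i hi hni hin => ?_⟩
      apply perterm_gen ρ u hu (c / 2) (2 * C) (by positivity) (by positivity) n i
        (i / 2) ((n - i) / 2) (n / 2)
        (by omega) (by omega) (by omega) (by omega) (by omega)
        ?_ ?_ ?_ ?_ hρ0 hin
      · have h1 : (min i (n - i)) ≤ 3 * (min (i / 2) ((n - i) / 2)) := by omega
        have h2 : ((min i (n - i) : ℕ) : ℝ) ≤ 3 * ((min (i / 2) ((n - i) / 2) : ℕ) : ℝ) := by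
          exact_mod_cast h1
        have h3 : (0:ℝ) ≤ ((min i (n - i) : ℕ) : ℝ) := by positivity
        nlinarith
      · exact (hBB i (by omega)).2
      · exact (hBB (n - i) (by omega)).2
      · exact (hBB n (by omega)).1
  obtain ⟨K, hK, N₀, hN₀pos, hper⟩ := main
  obtain ⟨N₁, hN₁⟩ := exists_nat_gt (2 * K / ε + 2)
  refine ⟨max (N₀ + 2) N₁, by omega, fun n hn => ?_⟩
  set N := max (N₀ + 2) N₁ with hNdef
  have hN2 : 2 ≤ N := by omega
  have hpt : ∀ i ∈ Finset.Icc N (n - N),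
      u i * u (n - i) ≤ K * u n * ((((i : ℕ) : ℝ) ^ 2)⁻¹ + (((n - i : ℕ) : ℝ) ^ 2)⁻¹) := by
    intro i hi
    rw [Finset.mem_Icc] at hi
    have h1 : N₀ ≤ i := by omega
    have h2 : N₀ ≤ n - i := by omega
    have h3 : i ≤ n := by omega
    refine le_trans (hper n i h1 h2 h3) ?_
    apply mul_le_mul_of_nonneg_left _ (mul_nonneg hK.le (hu n))
    rcases le_total i (n - i) with h | h
    · rw [min_eq_left h]
      have : (0:ℝ) ≤ (((n - i : ℕ) : ℝ) ^ 2)⁻¹ := by positivity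
      linarith
    · rw [min_eq_right h]
      have : (0:ℝ) ≤ (((i : ℕ) : ℝ) ^ 2)⁻¹ := by positivity
      linarith
  have hNR : 2 * K / ε + 2 < (N : ℝ) := by
    have h1 : (N₁ : ℝ) ≤ (N : ℝ) := by exact_mod_cast le_max_right (N₀ + 2) N₁
    linarith
  have hN1pos : (0:ℝ) < (N : ℝ) - 1 := by
    have : (0:ℝ) ≤ 2 * K / ε := by positivity
    linarith
  calc ∑ i ∈ Finset.Icc N (n - N), u i * u (n - i)
      ≤ ∑ i ∈ Finset.Icc N (n - N),
          K * u n * ((((i : ℕ) : ℝ) ^ 2)⁻¹ + (((n - i : ℕ) : ℝ) ^ 2)⁻¹) :=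
        Finset.sum_le_sum hpt
    _ = K * u n * ((∑ i ∈ Finset.Icc N (n - N), (((i : ℕ) : ℝ) ^ 2)⁻¹)
          + ∑ i ∈ Finset.Icc N (n - N), (((n - i : ℕ) : ℝ) ^ 2)⁻¹) := by
        rw [← Finset.mul_sum, Finset.sum_add_distrib]
    _ = K * u n * (2 * ∑ i ∈ Finset.Icc N (n - N), (((i : ℕ) : ℝ) ^ 2)⁻¹) := by
        rw [refl_sum (fun j => ((j : ℝ) ^ 2)⁻¹) N n hn]
        ring
    _ ≤ K * u n * (2 * ((N : ℝ) - 1)⁻¹) := by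
        apply mul_le_mul_of_nonneg_left _ (mul_nonneg hK.le (hu n))
        have := tail_sum hN2 (n - N)
        linarith
    _ ≤ ε * u n := by
        have hKe : K * (2 * ((N : ℝ) - 1)⁻¹) ≤ ε := by
          rw [show K * (2 * ((N : ℝ) - 1)⁻¹) = 2 * K / ((N : ℝ) - 1) by
            rw [div_eq_mul_inv]; ring]
          rw [div_le_iff₀ hN1pos]
          have h2 : 2 * K / ε ≤ (N : ℝ) - 1 := by linarith
          calc 2 * K = ε * (2 * K / ε) := by field_simp
            _ ≤ ε * ((N : ℝ) - 1) := mul_le_mul_of_nonneg_left h2 hε.le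
        calc K * u n * (2 * ((N : ℝ) - 1)⁻¹) = (K * (2 * ((N : ℝ) - 1)⁻¹)) * u n := by ring
          _ ≤ ε * u n := mul_le_mul_of_nonneg_right hKe (hu n)
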